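/- Let A be an [n_a = p^s·n'_a, k_a, d_a] repeated-root cyclic code over F_q (gcd(n'_a, p) = 1) with defining set D_A relative to an element α of order n'_a, and let B be an [n_b, k_b, d_b] simple-root cyclic code over F_q with defining set D_B relative to an element β of order n_b, where gcd(n_a, n_b) = 1. Set D̄_B = { i^⟨p^s⟩ : i ∈ D_B }. Then, relative to the element γ = αβ of order n'_a·n_b, the defining set of the repeated-root cyclic product code C = A ⊗ B (a code of length p^s·n'_a·n_b) is D_C = ( D_A ∪ D_A^{[n'_a]} ∪ D_A^{[2 n'_a]} ∪ … ∪ D_A^{[(n_b−1) n'_a]} ) ∪_max ( D̄_B ∪ D̄_B^{[n_b]} ∪ D̄_B^{[2 n_b]} ∪ … ∪ D̄_B^{[(n'_a−1) n_b]} ), where all index shifts are taken modulo n'_a·n_b. -/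

import Mathlib

open Polynomial Finset

section AuxBW
variable {K : Type*} [Field K]

lemma auxBW_deriv_eval_eq_zero {g : K[X]} {ξ : K} (h : (X - C ξ)^2 ∣ g) :
    g.derivative.eval ξ = 0 := by
  obtain ⟨h', rfl⟩ := h
  simp [derivative_pow]

lemma auxBW_rootMult_pow (ξ : K) {g : K[X]} (hg : g ≠ 0) (n : ℕ) :
    rootMultiplicity ξ (g ^ n) = n * rootMultiplicity ξ g := by
  induction n with
  | zero => simp [rootMultiplicity_eq_zero, IsRoot]
  | succ n ih =>
      rw [pow_succ, rootMultiplicity_mul (mul_ne_zero (pow_ne_zero _ hg) hg), ih]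
      ring

/-- multiplicity 1 root of `X^M - 1` when `M` invertible. -/
lemma auxBW_rootMult_X_pow_sub_one {M : ℕ} {ξ : K} (hM : (M : K) ≠ 0) (hξ : ξ ^ M = 1) :
    rootMultiplicity ξ (X ^ M - 1 : K[X]) = 1 := by
  have hM0 : M ≠ 0 := by rintro rfl; simp at hM
  have hne : (X ^ M - 1 : K[X]) ≠ 0 := by
    have : (X ^ M - 1 : K[X]).coeff M = 1 := by
      rw [coeff_sub, coeff_X_pow, if_pos rfl, coeff_one, if_neg (by omega), sub_zero]
    intro h; rw [h] at this; simp at this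
  have hξ0 : ξ ≠ 0 := by
    intro h; rw [h, zero_pow hM0] at hξ; exact zero_ne_one hξ
  refine le_antisymm ?_ ?_
  · rw [rootMultiplicity_le_iff hne]
    intro hdvd
    have h2 : (X - C ξ)^2 ∣ (X ^ M - 1 : K[X]) := (pow_dvd_pow _ (by norm_num)).trans hdvd
    have := auxBW_deriv_eval_eq_zero h2
    simp only [derivative_sub, derivative_one, derivative_X_pow, sub_zero, eval_mul, eval_pow,
      eval_natCast, eval_C, eval_X] at this
    exact (mul_ne_zero hM (pow_ne_zero _ hξ0)) this
  · rw [Nat.one_le_iff_ne_zero]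
    intro h
    rw [rootMultiplicity_eq_zero_iff] at h
    exact hne (h (by simp [IsRoot, hξ]))

lemma auxBW_rootMult_comp (P : K[X]) (hP : P ≠ 0) (ξ c : K) (r : ℕ)
    (hr : (r : K) ≠ 0) (hξ0 : ξ ≠ 0) (hξ : ξ ^ r = c) :
    rootMultiplicity ξ (P.comp (X ^ r)) = rootMultiplicity c P := by
  have hr0 : r ≠ 0 := by rintro rfl; simp at hr
  set m := rootMultiplicity c P with hm
  set Q := P /ₘ (X - C c) ^ m with hQ
  have hdecomp : (X - C c) ^ m * Q = P := pow_mul_divByMonic_rootMultiplicity_eq P c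
  have hQc : Q.eval c ≠ 0 := eval_divByMonic_pow_rootMultiplicity_ne_zero c hP
  have hQ0 : Q ≠ 0 := fun h => hQc (by simp [h])
  have hXrc : (X ^ r - C c : K[X]) ≠ 0 := by
    have : (X ^ r - C c : K[X]).coeff r = 1 := by
      rw [coeff_sub, coeff_X_pow, if_pos rfl, coeff_C, if_neg hr0, sub_zero]
    intro h; rw [h] at this; simp at this
  have hcomp : P.comp (X ^ r) = (X ^ r - C c) ^ m * Q.comp (X ^ r) := by
    rw [← hdecomp, mul_comp, pow_comp, sub_comp, X_comp, C_comp]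
  have hQcomp0 : (Q.comp (X ^ r)).eval ξ ≠ 0 := by
    rw [eval_comp, eval_pow, eval_X, hξ]; exact hQc
  have hQcompne : Q.comp (X ^ r) ≠ 0 := fun h => hQcomp0 (by simp [h])
  have h1 : rootMultiplicity ξ (X ^ r - C c : K[X]) = 1 := by
    refine le_antisymm ?_ ?_
    · rw [rootMultiplicity_le_iff hXrc]
      intro hdvd
      have := auxBW_deriv_eval_eq_zero hdvd
      simp only [derivative_sub, derivative_C, sub_zero, derivative_X_pow, eval_mul, eval_pow,
        eval_natCast, eval_C, eval_X] at this
      exact (mul_ne_zero hr (pow_ne_zero _ hξ0)) this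
    · rw [Nat.one_le_iff_ne_zero]
      intro h
      rw [rootMultiplicity_eq_zero_iff] at h
      exact hXrc (h (by simp [IsRoot, hξ]))
  rw [hcomp, rootMultiplicity_mul (mul_ne_zero (pow_ne_zero _ hXrc) hQcompne),
    auxBW_rootMult_pow _ hXrc, h1, rootMultiplicity_eq_zero (by simpa [IsRoot] using hQcomp0)]
  ring

lemma auxBW_Xpow_mod {R : Type*} [CommRing R] (N m : ℕ) :
    (X ^ N - 1 : R[X]) ∣ X ^ m - X ^ (m % N) := by
  rcases Nat.eq_zero_or_pos N with rfl | hN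
  · simp
  · have key : (X ^ m - X ^ (m % N) : R[X]) = X ^ (m % N) * ((X ^ N) ^ (m / N) - 1) := by
      rw [mul_sub, mul_one, ← pow_mul, ← pow_add, Nat.mod_add_div]
    rw [key]
    exact Dvd.dvd.mul_left (by simpa using sub_dvd_pow_sub_pow (X^N : R[X]) 1 (m/N)) _

lemma auxBW_rootMult_le_of_dvd {g h : K[X]} (ξ : K) (hgh : g ∣ h) (h0 : h ≠ 0) :
    rootMultiplicity ξ g ≤ rootMultiplicity ξ h := by
  rw [le_rootMultiplicity_iff h0]
  exact (pow_rootMultiplicity_dvd g ξ).trans hgh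

lemma auxBW_eq_X_pow_sub_one {F : Type*} [Field F] {g : F[X]} {n : ℕ} (hm : g.Monic)
    (hn : 0 < n) (hdvd : g ∣ X ^ n - 1) (hdeg : g.natDegree = n) : g = X ^ n - 1 := by
  have hmonic : (X ^ n - 1 : F[X]).Monic := by
    simpa using monic_X_pow_sub_C (1 : F) hn.ne'
  obtain ⟨u, hu⟩ := hdvd
  have hXn : (X ^ n - 1 : F[X]) ≠ 0 := hmonic.ne_zero
  have hu0 : u ≠ 0 := by rintro rfl; simp at hu; exact hXn hu
  have hdegs : (X ^ n - 1 : F[X]).natDegree = n := by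
    simpa using (natDegree_X_pow_sub_C (n := n) (r := (1:F)))
  have hun : u.natDegree = 0 := by
    have := natDegree_mul hm.ne_zero hu0
    rw [← hu, hdegs, hdeg] at this
    omega
  have hulc : u = C (u.coeff 0) := eq_C_of_natDegree_eq_zero hun
  have : u.coeff 0 = 1 := by
    have h1 : (X ^ n - 1 : F[X]).leadingCoeff = g.leadingCoeff * u.leadingCoeff := by
      rw [hu, leadingCoeff_mul]
    rw [hmonic.leadingCoeff, hm.leadingCoeff, one_mul] at h1
    rw [leadingCoeff, hun] at h1
    exact h1.symm
  rw [hu, hulc, this, map_one, mul_one]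

lemma auxBW_Xpow_sub_one_ne_zero {n : ℕ} (hn : n ≠ 0) : (X ^ n - 1 : K[X]) ≠ 0 := by
  have h := monic_X_pow_sub_C (1 : K) hn
  simpa using h.ne_zero

lemma auxBW_rootMult_in_pow {e m : ℕ} {ξ : K} (hm : (m : K) ≠ 0) (hm0 : m ≠ 0)
    (hξ : ξ ^ m = 1) : rootMultiplicity ξ ((X ^ m - 1 : K[X]) ^ e) = e := by
  rw [auxBW_rootMult_pow _ (auxBW_Xpow_sub_one_ne_zero hm0),
    auxBW_rootMult_X_pow_sub_one hm hξ, mul_one]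

end AuxBW

/-- **Defining set of a repeated-root cyclic product code (Burton–Weldon).**
Let `A` be the repeated-root cyclic code of length `n_a = p^s n'_a` with monic
generator `g_a` (defining set relative to `α` of order `n'_a`: the multiplicities of
the roots `α^i` of `g_a`), and `B` the simple-root cyclic code of length `n_b` with
monic generator `g_b` and defining set `D_B` relative to `β` of order `n_b`, with
`gcd(n_a, n_b) = 1`.  Let `g_C` be the monic generator polynomial of the serialized
product code `C = A ⊗ B` of length `p^s n'_a n_b`.  Then, relative to `γ = αβ`
(of order `n'_a n_b`), the defining set of `C` is
`(D_A ∪ D_A^{[n'_a]} ∪ … ∪ D_A^{[(n_b-1)n'_a]}) ∪_max (D̄_B ∪ D̄_B^{[n_b]} ∪ … ∪ D̄_B^{[(n'_a-1)n_b]})`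
with `D̄_B = {i^⟨p^s⟩ : i ∈ D_B}`; equivalently, for every `0 ≤ i < n'_a n_b` the
multiplicity of `γ^i` as a root of `g_C` equals
`max( mult of α^{i mod n'_a} in g_a , p^s if (i mod n_b) ∈ D_B else 0 )`. -/
theorem definingSet_of_repeatedRoot_cyclic_product_code
    {F K : Type*} [Field F] [Fintype F] [DecidableEq F] [Field K] [Algebra F K]
    (p t s n'a nb : ℕ) (hp : p.Prime) (hq : Fintype.card F = p ^ t) (ht : 0 < t)
    (hn'a : Nat.Coprime n'a p) (hnbp : Nat.Coprime nb p)
    (hcop : Nat.Coprime (p ^ s * n'a) nb)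
    (hna : 0 < p ^ s * n'a) (hnb : 0 < nb)
    (α β : Kˣ) (hα : orderOf α = n'a) (hβ : orderOf β = nb)
    (ga gb : F[X]) (hga_monic : ga.Monic) (hga_dvd : ga ∣ X ^ (p ^ s * n'a) - 1)
    (hgb_monic : gb.Monic) (hgb_dvd : gb ∣ X ^ nb - 1)
    (DB : Finset ℕ)
    (hDB : ∀ i : ℕ, i ∈ DB ↔ i < nb ∧ aeval ((β ^ i : Kˣ) : K) gb = 0)
    (gC : F[X]) (hgC_monic : gC.Monic)
    (hgC_dvd : gC ∣ X ^ (p ^ s * n'a * nb) - 1)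
    (hgen : ∀ c : F[X], c.degree < ((p ^ s * n'a * nb : ℕ) : WithBot ℕ) →
      ((∃ M : Fin (p ^ s * n'a) → Fin nb → F,
          (∀ j : Fin nb, ga ∣ ∑ i : Fin (p ^ s * n'a), C (M i j) * X ^ (i : ℕ)) ∧
          (∀ i : Fin (p ^ s * n'a), gb ∣ ∑ j : Fin nb, C (M i j) * X ^ (j : ℕ)) ∧
          ∀ ℓ : Fin (p ^ s * n'a * nb),
            c.coeff ℓ = M ⟨(ℓ : ℕ) % (p ^ s * n'a), Nat.mod_lt _ hna⟩
              ⟨(ℓ : ℕ) % nb, Nat.mod_lt _ hnb⟩) ↔ gC ∣ c)) :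
    ∀ i < n'a * nb,
      rootMultiplicity (((α * β) ^ i : Kˣ) : K) (gC.map (algebraMap F K)) =
        max (rootMultiplicity ((α ^ (i % n'a) : Kˣ) : K) (ga.map (algebraMap F K)))
          (if i % nb ∈ DB then p ^ s else 0) := by
  intro i hi
  classical
  haveI : Fact p.Prime := ⟨hp⟩
  -- characteristic of F and K
  have hcharF : CharP F p := by
    have h1 : CharP F (ringChar F) := ringChar.charP F
    have hnontriv : Nontrivial F := inferInstance
    have hprime : (ringChar F).Prime := CharP.char_is_prime F (ringChar F)
    have hdvd : ringChar F ∣ p ^ t := by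
      have h2 : ((Fintype.card F : F)) = 0 := Nat.cast_card_eq_zero F
      rw [hq] at h2
      exact (CharP.cast_eq_zero_iff F (ringChar F) (p ^ t)).mp h2
    have : ringChar F = p :=
      (Nat.prime_dvd_prime_iff_eq hprime hp).mp (hprime.dvd_of_dvd_pow hdvd)
    exact this ▸ h1
  haveI := hcharF
  haveI hcharK : CharP K p := charP_of_injective_algebraMap (algebraMap F K).injective p
  -- numerics
  have hn'a_pos : 0 < n'a := by
    rcases Nat.eq_zero_or_pos n'a with h | h
    · rw [h, mul_zero] at hna; exact absurd hna (lt_irrefl 0)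
    · exact h
  have hpn'a : ¬ p ∣ n'a := (Nat.Prime.coprime_iff_not_dvd hp).mp hn'a.symm
  have hpnb : ¬ p ∣ nb := (Nat.Prime.coprime_iff_not_dvd hp).mp hnbp.symm
  have hpM : ¬ p ∣ n'a * nb := by
    intro h; rcases (Nat.Prime.dvd_mul hp).mp h with h | h
    · exact hpn'a h
    · exact hpnb h
  have hcopab : Nat.Coprime n'a nb :=
    Nat.Coprime.coprime_dvd_left (dvd_mul_left n'a (p ^ s)) hcop
  have hγ : orderOf (α * β) = n'a * nb := by
    rw [← hα, ← hβ]
    exact (Commute.all α β).orderOf_mul_eq_mul_orderOf_of_coprime (by rw [hα, hβ]; exact hcopab)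
  -- CRT elements r, tt
  obtain ⟨r0, hr0⟩ := Nat.chineseRemainder hcop 1 0
  obtain ⟨tt, htt⟩ := Nat.chineseRemainder hcop 0 1
  set r : ℕ := if p ∣ r0 then r0 + p ^ s * n'a * nb else r0 with hr_def
  have hNmod : (p ^ s * n'a * nb) ≡ 0 [MOD p ^ s * n'a] :=
    (Nat.modEq_zero_iff_dvd).mpr (dvd_mul_right _ _)
  have hNmodb : (p ^ s * n'a * nb) ≡ 0 [MOD nb] :=
    (Nat.modEq_zero_iff_dvd).mpr (dvd_mul_left _ _)
  have hr_na : r ≡ 1 [MOD p ^ s * n'a] := by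
    rw [hr_def]; split_ifs with h
    · simpa using hr0.1.add hNmod
    · exact hr0.1
  have hr_nb : nb ∣ r := by
    rw [hr_def]; split_ifs with h
    · exact (Nat.modEq_zero_iff_dvd).mp (by simpa using hr0.2.add hNmodb)
    · exact (Nat.modEq_zero_iff_dvd).mp hr0.2
  have hpr : ¬ p ∣ r := by
    have hkey : p ∣ r0 → ¬ p ∣ p ^ s * n'a * nb := by
      intro h hN'
      rcases (Nat.Prime.dvd_mul hp).mp hN' with h1 | h1
      · rcases (Nat.Prime.dvd_mul hp).mp h1 with h2 | h2
        · have h2' : p ∣ p ^ s * n'a := h1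
          have h3 : r0 ≡ 1 [MOD p] := Nat.ModEq.of_dvd h2' hr0.1
          have h4 : r0 % p = 1 % p := h3
          obtain ⟨k, rfl⟩ := h
          rw [Nat.mul_mod_right] at h4
          have h5 : 1 % p = 1 := Nat.mod_eq_of_lt hp.one_lt
          omega
        · exact hpn'a h2
      · exact hpnb h1
    rw [hr_def]; split_ifs with h
    · intro hdvd; exact hkey h ((Nat.dvd_add_right h).mp hdvd)
    · exact h
  have ht_na : (p ^ s * n'a) ∣ tt := (Nat.modEq_zero_iff_dvd).mp htt.1
  have ht_nb : tt ≡ 1 [MOD nb] := htt.2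
  -- unit computations
  have hn'a_dvd : n'a ∣ p ^ s * n'a := dvd_mul_left n'a (p ^ s)
  have hαr : α ^ r = α := by
    have h1 : r % n'a = 1 % n'a := Nat.ModEq.of_dvd hn'a_dvd hr_na
    have e1 : α ^ (r % n'a) = α ^ r := by rw [← hα]; exact pow_mod_orderOf α r
    have e2 : α ^ (1 % n'a) = α ^ 1 := by rw [← hα]; exact pow_mod_orderOf α 1
    rw [← e1, h1, e2, pow_one]
  have hβr : β ^ r = 1 := by
    obtain ⟨k, hk⟩ := hr_nb
    rw [hk, pow_mul, ← hβ, pow_orderOf_eq_one, one_pow]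
  have hαt : α ^ tt = 1 := by
    obtain ⟨k, hk⟩ := hn'a_dvd.trans ht_na
    rw [hk, pow_mul, ← hα, pow_orderOf_eq_one, one_pow]
  have hβt : β ^ tt = β := by
    have h1 : tt % nb = 1 % nb := ht_nb
    have e1 : β ^ (tt % nb) = β ^ tt := by rw [← hβ]; exact pow_mod_orderOf β tt
    have e2 : β ^ (1 % nb) = β ^ 1 := by rw [← hβ]; exact pow_mod_orderOf β 1
    rw [← e1, h1, e2, pow_one]
  have hγr : (α * β) ^ r = α := by rw [mul_pow, hαr, hβr, mul_one]
  have hγt : (α * β) ^ tt = β := by rw [mul_pow, hαt, hβt, one_mul]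
  -- abbreviations
  set A : K[X] := ga.map (algebraMap F K) with hA_def
  set Bp : K[X] := gb.map (algebraMap F K) with hB_def
  set G : K[X] := gC.map (algebraMap F K) with hG_def
  set ξ : K := (((α * β) ^ i : Kˣ) : K) with hξ_def
  set ea : ℕ := rootMultiplicity ((α ^ (i % n'a) : Kˣ) : K) A with hea_def
  have hξ0 : ξ ≠ 0 := Units.ne_zero _
  have hξM : ξ ^ (n'a * nb) = 1 := by
    have h : ((α * β) ^ i) ^ (n'a * nb) = 1 := by
      rw [← pow_mul, mul_comm i, pow_mul, ← hγ, pow_orderOf_eq_one, one_pow]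
    simpa [hξ_def] using congrArg Units.val h
  have hξr : ξ ^ r = ((α ^ (i % n'a) : Kˣ) : K) := by
    have h : ((α * β) ^ i) ^ r = α ^ (i % n'a) := by
      rw [← pow_mul, mul_comm i r, pow_mul, hγr, ← hα, pow_mod_orderOf]
    simpa [hξ_def] using congrArg Units.val h
  have hξt : ξ ^ tt = ((β ^ (i % nb) : Kˣ) : K) := by
    have h : ((α * β) ^ i) ^ tt = β ^ (i % nb) := by
      rw [← pow_mul, mul_comm i tt, pow_mul, hγt, ← hβ, pow_mod_orderOf]
    simpa [hξ_def] using congrArg Units.val h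
  have hXM_ne : (X ^ (n'a * nb) - 1 : K[X]) ≠ 0 :=
    auxBW_Xpow_sub_one_ne_zero (Nat.mul_ne_zero hn'a_pos.ne' hnb.ne')
  have hMK : ((n'a * nb : ℕ) : K) ≠ 0 := fun h => hpM ((CharP.cast_eq_zero_iff K p _).mp h)
  have hXNfact : (X ^ (p ^ s * n'a * nb) - 1 : K[X]) = (X ^ (n'a * nb) - 1) ^ p ^ s := by
    rw [sub_pow_char_pow, one_pow, ← pow_mul]
    have : n'a * nb * p ^ s = p ^ s * n'a * nb := by ring
    rw [this]
  have hrootXN : rootMultiplicity ξ (X ^ (p ^ s * n'a * nb) - 1 : K[X]) = p ^ s := by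
    rw [hXNfact]; exact auxBW_rootMult_in_pow hMK (Nat.mul_ne_zero hn'a_pos.ne' hnb.ne') hξM
  have hXN_ne : (X ^ (p ^ s * n'a * nb) - 1 : K[X]) ≠ 0 := by
    rw [hXNfact]; exact pow_ne_zero _ hXM_ne
  have hdvdXN : (X - C ξ) ^ p ^ s ∣ (X ^ (p ^ s * n'a * nb) - 1 : K[X]) := by
    rw [hXNfact]
    exact pow_dvd_pow_of_dvd (dvd_iff_isRoot.mpr (by simp [IsRoot, hξM])) _
  have hGdvd : G ∣ (X ^ (p ^ s * n'a * nb) - 1 : K[X]) := by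
    have h := Polynomial.map_dvd (algebraMap F K) hgC_dvd
    simpa using h
  have hG0 : G ≠ 0 := (hgC_monic.map _).ne_zero
  have hA0 : A ≠ 0 := (hga_monic.map _).ne_zero
  have hB0 : Bp ≠ 0 := (hgb_monic.map _).ne_zero
  have hAdvd : A ∣ (X ^ (p ^ s * n'a) - 1 : K[X]) := by
    have h := Polynomial.map_dvd (algebraMap F K) hga_dvd
    simpa using h
  have hBdvd : Bp ∣ (X ^ nb - 1 : K[X]) := by
    have h := Polynomial.map_dvd (algebraMap F K) hgb_dvd
    simpa using h
  have hαja : ((α ^ (i % n'a) : Kˣ) : K) ^ n'a = 1 := by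
    have h : (α ^ (i % n'a)) ^ n'a = 1 := by
      rw [← pow_mul, mul_comm, pow_mul, ← hα, pow_orderOf_eq_one, one_pow]
    simpa using congrArg Units.val h
  have hβjb : ((β ^ (i % nb) : Kˣ) : K) ^ nb = 1 := by
    have h : (β ^ (i % nb)) ^ nb = 1 := by
      rw [← pow_mul, mul_comm, pow_mul, ← hβ, pow_orderOf_eq_one, one_pow]
    simpa using congrArg Units.val h
  have hn'aK : ((n'a : ℕ) : K) ≠ 0 := fun h => hpn'a ((CharP.cast_eq_zero_iff K p _).mp h)
  have hXnafact : (X ^ (p ^ s * n'a) - 1 : K[X]) = (X ^ n'a - 1) ^ p ^ s := by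
    rw [sub_pow_char_pow, one_pow, ← pow_mul]
    have : n'a * p ^ s = p ^ s * n'a := by ring
    rw [this]
  have hXna_ne : (X ^ (p ^ s * n'a) - 1 : K[X]) ≠ 0 := by
    rw [hXnafact]; exact pow_ne_zero _ (auxBW_Xpow_sub_one_ne_zero hn'a_pos.ne')
  have h_ea_le : ea ≤ p ^ s := by
    have h1 : rootMultiplicity ((α ^ (i % n'a) : Kˣ) : K) (X ^ (p ^ s * n'a) - 1 : K[X])
        = p ^ s := by
      rw [hXnafact]; exact auxBW_rootMult_in_pow hn'aK hn'a_pos.ne' hαja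
    rw [hea_def, ← h1]
    exact auxBW_rootMult_le_of_dvd _ hAdvd hXna_ne
  -- the CRT exponent map
  set sg : ℕ → ℕ → ℕ := fun u v => (r * u + tt * v) % (p ^ s * n'a * nb) with hsg_def
  have hN_pos : 0 < p ^ s * n'a * nb := Nat.mul_pos hna hnb
  have hsglt : ∀ u v, sg u v < p ^ s * n'a * nb := fun u v => Nat.mod_lt _ hN_pos
  have hsga : ∀ u v, u < p ^ s * n'a → sg u v % (p ^ s * n'a) = u := by
    intro u v hu
    have h1 : sg u v % (p ^ s * n'a) = (r * u + tt * v) % (p ^ s * n'a) :=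
      Nat.mod_mod_of_dvd _ (dvd_mul_right _ _)
    have h2 : (r * u + tt * v) ≡ 1 * u + 0 * v [MOD p ^ s * n'a] :=
      Nat.ModEq.add (hr_na.mul_right u)
        (((Nat.modEq_zero_iff_dvd).mpr ht_na).mul_right v)
    have h2' : (r * u + tt * v) % (p ^ s * n'a) = (1 * u + 0 * v) % (p ^ s * n'a) := h2
    rw [h1, h2']
    simp [Nat.mod_eq_of_lt hu]
  have hsgb : ∀ u v, v < nb → sg u v % nb = v := by
    intro u v hv
    have h1 : sg u v % nb = (r * u + tt * v) % nb :=
      Nat.mod_mod_of_dvd _ (dvd_mul_left _ _)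
    have h2 : (r * u + tt * v) ≡ 0 * u + 1 * v [MOD nb] :=
      Nat.ModEq.add (((Nat.modEq_zero_iff_dvd).mpr hr_nb).mul_right u)
        (ht_nb.mul_right v)
    have h2' : (r * u + tt * v) % nb = (0 * u + 1 * v) % nb := h2
    rw [h1, h2']
    simp [Nat.mod_eq_of_lt hv]
  have hsgid : ∀ ℓ, ℓ < p ^ s * n'a * nb → sg (ℓ % (p ^ s * n'a)) (ℓ % nb) = ℓ := by
    intro ℓ hℓ
    have h1 : sg (ℓ % (p ^ s * n'a)) (ℓ % nb) % (p ^ s * n'a) = ℓ % (p ^ s * n'a) :=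
      hsga _ _ (Nat.mod_lt _ hna)
    have h2 : sg (ℓ % (p ^ s * n'a)) (ℓ % nb) % nb = ℓ % nb := hsgb _ _ (Nat.mod_lt _ hnb)
    have h1' : sg (ℓ % (p ^ s * n'a)) (ℓ % nb) ≡ ℓ [MOD p ^ s * n'a] := h1
    have h2' : sg (ℓ % (p ^ s * n'a)) (ℓ % nb) ≡ ℓ [MOD nb] := h2
    have h3 : sg (ℓ % (p ^ s * n'a)) (ℓ % nb) ≡ ℓ [MOD (p ^ s * n'a) * nb] :=
      (Nat.modEq_and_modEq_iff_modEq_mul hcop).mp ⟨h1', h2'⟩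
    have h4 : sg (ℓ % (p ^ s * n'a)) (ℓ % nb) % (p ^ s * n'a * nb) = ℓ % (p ^ s * n'a * nb) := h3
    rw [Nat.mod_eq_of_lt (hsglt _ _), Nat.mod_eq_of_lt hℓ] at h4
    exact h4
  refine le_antisymm ?_ ?_
  · -- upper bound: rootMultiplicity ξ G ≤ max ea eb
    by_cases hcase : p ^ s ≤ max ea (if i % nb ∈ DB then p ^ s else 0)
    · calc rootMultiplicity ξ G
          ≤ rootMultiplicity ξ (X ^ (p ^ s * n'a * nb) - 1 : K[X]) :=
            auxBW_rootMult_le_of_dvd _ hGdvd hXN_ne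
        _ = p ^ s := hrootXN
        _ ≤ _ := hcase
    · push_neg at hcase
      have hnotDB : i % nb ∉ DB := by
        intro hmem
        rw [if_pos hmem] at hcase
        exact absurd hcase (not_lt.mpr (le_max_right _ _))
      have hea_lt : ea < p ^ s := lt_of_le_of_lt (le_max_left _ _) hcase
      rw [if_neg hnotDB, Nat.max_zero]
      have hrootXna : rootMultiplicity ((α ^ (i % n'a) : Kˣ) : K)
          (X ^ (p ^ s * n'a) - 1 : K[X]) = p ^ s := by
        rw [hXnafact]; exact auxBW_rootMult_in_pow hn'aK hn'a_pos.ne' hαja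
      -- degrees of ga and gb are strictly smaller than the block lengths
      have hXnaF_ne : (X ^ (p ^ s * n'a) - 1 : F[X]) ≠ 0 :=
        auxBW_Xpow_sub_one_ne_zero hna.ne'
      have hga_lt : ga.natDegree < p ^ s * n'a := by
        have h1 := Polynomial.natDegree_le_of_dvd hga_dvd hXnaF_ne
        have h2 : (X ^ (p ^ s * n'a) - 1 : F[X]).natDegree = p ^ s * n'a := by
          simpa using (natDegree_X_pow_sub_C (n := p ^ s * n'a) (r := (1 : F)))
        rw [h2] at h1
        rcases lt_or_eq_of_le h1 with h | h
        · exact h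
        · exfalso
          have hgaeq : ga = X ^ (p ^ s * n'a) - 1 :=
            auxBW_eq_X_pow_sub_one hga_monic hna hga_dvd h
          have : ea = p ^ s := by
            rw [hea_def, hA_def, hgaeq]
            have hmap : ((X ^ (p ^ s * n'a) - 1 : F[X]).map (algebraMap F K))
                = (X ^ (p ^ s * n'a) - 1 : K[X]) := by simp
            rw [hmap]
            exact hrootXna
          omega
      have hXnbF_ne : (X ^ nb - 1 : F[X]) ≠ 0 := auxBW_Xpow_sub_one_ne_zero hnb.ne'
      have hgb_lt : gb.natDegree < nb := by
        have h1 := Polynomial.natDegree_le_of_dvd hgb_dvd hXnbF_ne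
        have h2 : (X ^ nb - 1 : F[X]).natDegree = nb := by
          simpa using (natDegree_X_pow_sub_C (n := nb) (r := (1 : F)))
        rw [h2] at h1
        rcases lt_or_eq_of_le h1 with h | h
        · exact h
        · exfalso
          have hgbeq : gb = X ^ nb - 1 := auxBW_eq_X_pow_sub_one hgb_monic hnb hgb_dvd h
          refine hnotDB ((hDB (i % nb)).mpr ⟨Nat.mod_lt _ hnb, ?_⟩)
          rw [hgbeq]
          simp only [map_sub, map_pow, map_one, aeval_X]
          rw [hβjb, sub_self]
      -- build the rank-one product codeword
      set c : F[X] := ∑ uv ∈ Finset.range (p ^ s * n'a) ×ˢ Finset.range nb,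
          C (ga.coeff uv.1 * gb.coeff uv.2) * X ^ (sg uv.1 uv.2) with hc_def
      have hccoeff : ∀ ℓ, ℓ < p ^ s * n'a * nb →
          c.coeff ℓ = ga.coeff (ℓ % (p ^ s * n'a)) * gb.coeff (ℓ % nb) := by
        intro ℓ hℓ
        rw [hc_def, finset_sum_coeff]
        rw [Finset.sum_eq_single ((ℓ % (p ^ s * n'a), ℓ % nb))]
        · rw [coeff_C_mul, coeff_X_pow, hsgid ℓ hℓ, if_pos rfl, mul_one]
        · intro uv huv hne
          rw [coeff_C_mul, coeff_X_pow, if_neg, mul_zero]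
          intro heq
          apply hne
          simp only [Finset.mem_product, Finset.mem_range] at huv
          have h1 : uv.1 = ℓ % (p ^ s * n'a) := by
            rw [heq]; exact (hsga _ _ huv.1).symm
          have h2 : uv.2 = ℓ % nb := by
            rw [heq]; exact (hsgb _ _ huv.2).symm
          exact Prod.ext h1 h2
        · intro habs
          exact absurd (Finset.mem_product.mpr
            ⟨Finset.mem_range.mpr (Nat.mod_lt _ hna), Finset.mem_range.mpr (Nat.mod_lt _ hnb)⟩)
            habs
      have hcdeg : c.degree < ((p ^ s * n'a * nb : ℕ) : WithBot ℕ) := by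
        rw [degree_lt_iff_coeff_zero]
        intro m hm
        rw [hc_def, finset_sum_coeff]
        refine Finset.sum_eq_zero fun uv _ => ?_
        rw [coeff_C_mul, coeff_X_pow, if_neg, mul_zero]
        intro heq
        have := hsglt uv.1 uv.2
        rw [← heq] at this
        exact absurd this (not_lt.mpr (by exact_mod_cast hm))
      have hgCc : gC ∣ c := by
        rw [← hgen c hcdeg]
        refine ⟨fun u v => ga.coeff u * gb.coeff v, ?_, ?_, ?_⟩
        · intro j
          have hsum : ∑ i' : Fin (p ^ s * n'a), C (ga.coeff i' * gb.coeff j) * X ^ (i' : ℕ)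
              = C (gb.coeff j) * ∑ i' : Fin (p ^ s * n'a), C (ga.coeff i') * X ^ (i' : ℕ) := by
            rw [Finset.mul_sum]
            refine Finset.sum_congr rfl fun u _ => ?_
            rw [C_mul]; ring
          have hga_sum : ∑ i' : Fin (p ^ s * n'a), C (ga.coeff i') * X ^ (i' : ℕ) = ga := by
            rw [Fin.sum_univ_eq_sum_range (fun u => C (ga.coeff u) * X ^ u)]
            conv_rhs => rw [ga.as_sum_range' _ hga_lt]
            exact Finset.sum_congr rfl fun u _ => C_mul_X_pow_eq_monomial
          rw [hsum, hga_sum]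
          exact dvd_mul_left ga (C (gb.coeff j))
        · intro i'
          have hsum : ∑ j : Fin nb, C (ga.coeff i' * gb.coeff j) * X ^ (j : ℕ)
              = C (ga.coeff i') * ∑ j : Fin nb, C (gb.coeff j) * X ^ (j : ℕ) := by
            rw [Finset.mul_sum]
            refine Finset.sum_congr rfl fun v _ => ?_
            rw [C_mul]; ring
          have hgb_sum : ∑ j : Fin nb, C (gb.coeff j) * X ^ (j : ℕ) = gb := by
            rw [Fin.sum_univ_eq_sum_range (fun v => C (gb.coeff v) * X ^ v)]
            conv_rhs => rw [gb.as_sum_range' _ hgb_lt]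
            exact Finset.sum_congr rfl fun v _ => C_mul_X_pow_eq_monomial
          rw [hsum, hgb_sum]
          exact dvd_mul_left gb (C (ga.coeff i'))
        · intro ℓ
          exact hccoeff ℓ ℓ.isLt
      -- the comparison polynomial with known multiplicity
      have hprod : A.comp (X ^ r) * Bp.comp (X ^ tt)
          = ∑ uv ∈ Finset.range (p ^ s * n'a) ×ˢ Finset.range nb,
              C ((algebraMap F K) (ga.coeff uv.1 * gb.coeff uv.2))
                * X ^ (r * uv.1 + tt * uv.2) := by
        have hA' : A.comp (X ^ r) = ∑ u ∈ Finset.range (p ^ s * n'a),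
            C ((algebraMap F K) (ga.coeff u)) * X ^ (r * u) := by
          conv_lhs => rw [A.as_sum_range' (p ^ s * n'a)
            (lt_of_le_of_lt natDegree_map_le hga_lt)]
          rw [Polynomial.sum_comp]
          refine Finset.sum_congr rfl fun u _ => ?_
          rw [← C_mul_X_pow_eq_monomial, mul_comp, C_comp, pow_comp, X_comp, ← pow_mul,
            hA_def, coeff_map]
        have hB' : Bp.comp (X ^ tt) = ∑ v ∈ Finset.range nb,
            C ((algebraMap F K) (gb.coeff v)) * X ^ (tt * v) := by
          conv_lhs => rw [Bp.as_sum_range' nb (lt_of_le_of_lt natDegree_map_le hgb_lt)]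
          rw [Polynomial.sum_comp]
          refine Finset.sum_congr rfl fun v _ => ?_
          rw [← C_mul_X_pow_eq_monomial, mul_comp, C_comp, pow_comp, X_comp, ← pow_mul,
            hB_def, coeff_map]
        rw [hA', hB', Finset.sum_mul_sum, Finset.sum_product]
        refine Finset.sum_congr rfl fun u _ => Finset.sum_congr rfl fun v _ => ?_
        rw [map_mul, C_mul, pow_add]
        ring
      have hcsplit : (X ^ (p ^ s * n'a * nb) - 1 : K[X]) ∣
          c.map (algebraMap F K) - A.comp (X ^ r) * Bp.comp (X ^ tt) := by
        have hmapc : c.map (algebraMap F K)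
            = ∑ uv ∈ Finset.range (p ^ s * n'a) ×ˢ Finset.range nb,
                C ((algebraMap F K) (ga.coeff uv.1 * gb.coeff uv.2)) * X ^ (sg uv.1 uv.2) := by
          rw [hc_def, Polynomial.map_sum]
          exact Finset.sum_congr rfl fun uv _ => by
            rw [Polynomial.map_mul, map_C, Polynomial.map_pow, map_X]
        rw [hmapc, hprod, ← Finset.sum_sub_distrib]
        refine Finset.dvd_sum fun uv _ => ?_
        rw [← mul_sub]
        refine Dvd.dvd.mul_left ?_ _
        have hsgval : sg uv.1 uv.2 = (r * uv.1 + tt * uv.2) % (p ^ s * n'a * nb) := rfl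
        rw [hsgval]
        have h5 := auxBW_Xpow_mod (R := K) (p ^ s * n'a * nb) (r * uv.1 + tt * uv.2)
        have e : (X : K[X]) ^ ((r * uv.1 + tt * uv.2) % (p ^ s * n'a * nb))
            - X ^ (r * uv.1 + tt * uv.2)
            = -(X ^ (r * uv.1 + tt * uv.2)
              - X ^ ((r * uv.1 + tt * uv.2) % (p ^ s * n'a * nb))) := (neg_sub _ _).symm
        rw [e]
        exact dvd_neg.mpr h5
      have hr0 : r ≠ 0 := fun h => hpr (h ▸ dvd_zero p)
      have hAcomp_ne : A.comp (X ^ r) ≠ 0 := by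
        intro h
        rcases comp_eq_zero_iff.mp h with h1 | ⟨h1, h2⟩
        · exact hA0 h1
        · have h3 : ((X : K[X]) ^ r).natDegree = 0 := by rw [h2]; exact natDegree_C _
          rw [natDegree_X_pow] at h3
          exact hr0 h3
      have hrK : ((r : ℕ) : K) ≠ 0 := fun h => hpr ((CharP.cast_eq_zero_iff K p _).mp h)
      have hmultA : rootMultiplicity ξ (A.comp (X ^ r)) = ea :=
        auxBW_rootMult_comp A hA0 ξ _ r hrK hξ0 hξr
      have hBeval : (Bp.comp (X ^ tt)).eval ξ ≠ 0 := by
        rw [eval_comp, eval_pow, eval_X, hξt]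
        intro h0
        refine hnotDB ((hDB (i % nb)).mpr ⟨Nat.mod_lt _ hnb, ?_⟩)
        rw [aeval_def, ← eval_map]
        exact h0
      have hBcomp_ne : Bp.comp (X ^ tt) ≠ 0 := fun h => hBeval (by rw [h]; simp)
      have hmultB : rootMultiplicity ξ (Bp.comp (X ^ tt)) = 0 :=
        rootMultiplicity_eq_zero hBeval
      have hmultP : rootMultiplicity ξ (A.comp (X ^ r) * Bp.comp (X ^ tt)) = ea := by
        rw [rootMultiplicity_mul (mul_ne_zero hAcomp_ne hBcomp_ne), hmultA, hmultB, add_zero]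
      by_contra hcon
      push_neg at hcon
      have h1 : (X - C ξ) ^ (ea + 1) ∣ G :=
        (pow_dvd_pow _ (by omega)).trans (pow_rootMultiplicity_dvd G ξ)
      have hGdvdc : G ∣ c.map (algebraMap F K) := by
        rw [hG_def]
        exact Polynomial.map_dvd _ hgCc
      have h2 : (X - C ξ) ^ (ea + 1) ∣ c.map (algebraMap F K) := h1.trans hGdvdc
      have h3 : (X - C ξ) ^ (ea + 1) ∣ (X ^ (p ^ s * n'a * nb) - 1 : K[X]) :=
        (pow_dvd_pow _ (by omega : ea + 1 ≤ p ^ s)).trans hdvdXN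
      have h4 : (X - C ξ) ^ (ea + 1) ∣ A.comp (X ^ r) * Bp.comp (X ^ tt) := by
        have h5 := dvd_sub h2 (h3.trans hcsplit)
        rwa [sub_sub_cancel] at h5
      have h6 : ea + 1 ≤ rootMultiplicity ξ (A.comp (X ^ r) * Bp.comp (X ^ tt)) :=
        (le_rootMultiplicity_iff (mul_ne_zero hAcomp_ne hBcomp_ne)).mpr h4
      omega
  · -- lower bound: max ea eb ≤ rootMultiplicity ξ G
    have hXNF_ne : (X ^ (p ^ s * n'a * nb) - 1 : F[X]) ≠ 0 :=
      auxBW_Xpow_sub_one_ne_zero hN_pos.ne'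
    have hdegN : gC.natDegree ≤ p ^ s * n'a * nb := by
      have h1 := Polynomial.natDegree_le_of_dvd hgC_dvd hXNF_ne
      have h2 : (X ^ (p ^ s * n'a * nb) - 1 : F[X]).natDegree = p ^ s * n'a * nb := by
        simpa using (natDegree_X_pow_sub_C (n := p ^ s * n'a * nb) (r := (1 : F)))
      rwa [h2] at h1
    rcases eq_or_lt_of_le hdegN with heq | hlt
    · -- gC is the whole X^N - 1
      have hgCeq : gC = X ^ (p ^ s * n'a * nb) - 1 :=
        auxBW_eq_X_pow_sub_one hgC_monic hN_pos hgC_dvd heq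
      have hGval : rootMultiplicity ξ G = p ^ s := by
        rw [hG_def, hgCeq]
        have hmap : ((X ^ (p ^ s * n'a * nb) - 1 : F[X]).map (algebraMap F K))
            = (X ^ (p ^ s * n'a * nb) - 1 : K[X]) := by
          simp
        rw [hmap]; exact hrootXN
      rw [hGval]
      refine max_le h_ea_le ?_
      split_ifs
      · exact le_refl _
      · exact Nat.zero_le _
    · -- gC has degree < N : use the product-code structure
      have hdeg' : gC.degree < ((p ^ s * n'a * nb : ℕ) : WithBot ℕ) :=
        lt_of_le_of_lt degree_le_natDegree (by exact_mod_cast hlt)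
      obtain ⟨Mm, hcols, hrows, hcoeffs⟩ := (hgen gC hdeg').mpr dvd_rfl
      set Mf : ℕ → ℕ → F := fun u v =>
        Mm ⟨u % (p ^ s * n'a), Nat.mod_lt _ hna⟩ ⟨v % nb, Nat.mod_lt _ hnb⟩ with hMf_def
      have hgCco : ∀ ℓ, ℓ < p ^ s * n'a * nb → gC.coeff ℓ = Mf ℓ ℓ := fun ℓ hℓ => hcoeffs ⟨ℓ, hℓ⟩
      have hMfmod : ∀ u v, Mf (u % (p ^ s * n'a)) (v % nb) = Mf u v := by
        intro u v
        have e1 : u % (p ^ s * n'a) % (p ^ s * n'a) = u % (p ^ s * n'a) :=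
          Nat.mod_mod_of_dvd _ dvd_rfl
        have e2 : v % nb % nb = v % nb := Nat.mod_mod_of_dvd _ dvd_rfl
        simp only [hMf_def, e1, e2]
      have hgCsum : gC = ∑ uv ∈ Finset.range (p ^ s * n'a) ×ˢ Finset.range nb,
          C (Mf uv.1 uv.2) * X ^ (sg uv.1 uv.2) := by
        have h0 : gC = ∑ ℓ ∈ Finset.range (p ^ s * n'a * nb), C (gC.coeff ℓ) * X ^ ℓ := by
          conv_lhs => rw [gC.as_sum_range' _ hlt]
          exact Finset.sum_congr rfl fun ℓ _ => (C_mul_X_pow_eq_monomial).symm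
        rw [h0]
        refine Finset.sum_nbij' (fun ℓ => (ℓ % (p ^ s * n'a), ℓ % nb))
          (fun uv => sg uv.1 uv.2) ?_ ?_ ?_ ?_ ?_
        · intro ℓ hℓ
          simp only [Finset.mem_product, Finset.mem_range]
          exact ⟨Nat.mod_lt _ hna, Nat.mod_lt _ hnb⟩
        · intro uv huv
          simp only [Finset.mem_range]
          exact hsglt _ _
        · intro ℓ hℓ
          exact hsgid ℓ (Finset.mem_range.mp hℓ)
        · intro uv huv
          simp only [Finset.mem_product, Finset.mem_range] at huv
          exact Prod.ext (hsga _ _ huv.1) (hsgb _ _ huv.2)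
        · intro ℓ hℓ
          rw [hsgid ℓ (Finset.mem_range.mp hℓ), hgCco ℓ (Finset.mem_range.mp hℓ), hMfmod]
      have hcol : ∀ v, v < nb → ga ∣ ∑ u ∈ Finset.range (p ^ s * n'a), C (Mf u v) * X ^ u := by
        intro v hv
        have h := hcols ⟨v, hv⟩
        have he : ∑ u ∈ Finset.range (p ^ s * n'a), C (Mf u v) * X ^ u
            = ∑ u : Fin (p ^ s * n'a), C (Mm u ⟨v, hv⟩) * X ^ (u : ℕ) := by
          rw [← Fin.sum_univ_eq_sum_range (fun u => C (Mf u v) * X ^ u) (p ^ s * n'a)]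
          refine Finset.sum_congr rfl fun u _ => ?_
          have : Mf (u : ℕ) v = Mm u ⟨v, hv⟩ := by
            simp only [hMf_def, Nat.mod_eq_of_lt u.isLt, Nat.mod_eq_of_lt hv, Fin.eta]
          rw [this]
        rw [he]; exact h
      have hrow : ∀ u, u < p ^ s * n'a → gb ∣ ∑ v ∈ Finset.range nb, C (Mf u v) * X ^ v := by
        intro u hu
        have h := hrows ⟨u, hu⟩
        have he : ∑ v ∈ Finset.range nb, C (Mf u v) * X ^ v
            = ∑ v : Fin nb, C (Mm ⟨u, hu⟩ v) * X ^ (v : ℕ) := by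
          rw [← Fin.sum_univ_eq_sum_range (fun v => C (Mf u v) * X ^ v) nb]
          refine Finset.sum_congr rfl fun v _ => ?_
          have : Mf u (v : ℕ) = Mm ⟨u, hu⟩ v := by
            simp only [hMf_def, Nat.mod_eq_of_lt hu, Nat.mod_eq_of_lt v.isLt, Fin.eta]
          rw [this]
        rw [he]; exact h
      have hGsum : G = ∑ uv ∈ Finset.range (p ^ s * n'a) ×ˢ Finset.range nb,
          C ((algebraMap F K) (Mf uv.1 uv.2)) * X ^ (sg uv.1 uv.2) := by
        rw [hG_def, hgCsum, Polynomial.map_sum]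
        exact Finset.sum_congr rfl fun uv _ => by
          rw [Polynomial.map_mul, map_C, Polynomial.map_pow, map_X]
      set T : K[X] := ∑ uv ∈ Finset.range (p ^ s * n'a) ×ˢ Finset.range nb,
          C ((algebraMap F K) (Mf uv.1 uv.2)) * X ^ (r * uv.1 + tt * uv.2) with hT_def
      have hsplit : (X ^ (p ^ s * n'a * nb) - 1 : K[X]) ∣ G - T := by
        rw [hGsum, hT_def, ← Finset.sum_sub_distrib]
        refine Finset.dvd_sum fun uv _ => ?_
        rw [← mul_sub]
        refine Dvd.dvd.mul_left ?_ _
        have hsgval : sg uv.1 uv.2 = (r * uv.1 + tt * uv.2) % (p ^ s * n'a * nb) := rfl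
        rw [hsgval]
        have h5 := auxBW_Xpow_mod (R := K) (p ^ s * n'a * nb) (r * uv.1 + tt * uv.2)
        have e : (X : K[X]) ^ ((r * uv.1 + tt * uv.2) % (p ^ s * n'a * nb))
            - X ^ (r * uv.1 + tt * uv.2)
            = -(X ^ (r * uv.1 + tt * uv.2)
              - X ^ ((r * uv.1 + tt * uv.2) % (p ^ s * n'a * nb))) := (neg_sub _ _).symm
        rw [e]
        exact dvd_neg.mpr h5
      have h_ea : ea ≤ rootMultiplicity ξ G := by
        rw [le_rootMultiplicity_iff hG0]
        have hTd : (X - C ξ) ^ ea ∣ T := by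
          rw [hT_def, Finset.sum_product_right]
          refine Finset.dvd_sum fun v hv => ?_
          dsimp only
          have hinner : ∑ u ∈ Finset.range (p ^ s * n'a),
              C ((algebraMap F K) (Mf u v)) * X ^ (r * u + tt * v)
              = (((∑ u ∈ Finset.range (p ^ s * n'a), C (Mf u v) * X ^ u).map
                  (algebraMap F K)).comp (X ^ r)) * X ^ (tt * v) := by
            rw [Polynomial.map_sum, Polynomial.sum_comp, Finset.sum_mul]
            refine Finset.sum_congr rfl fun u _ => ?_
            rw [Polynomial.map_mul, map_C, Polynomial.map_pow, map_X, mul_comp, C_comp,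
              pow_comp, X_comp, ← pow_mul, mul_assoc, ← pow_add]
          rw [hinner]
          refine Dvd.dvd.mul_right ?_ _
          have hgadvd : (X - C ((α ^ (i % n'a) : Kˣ) : K)) ^ ea ∣
              (∑ u ∈ Finset.range (p ^ s * n'a), C (Mf u v) * X ^ u).map (algebraMap F K) :=
            (pow_rootMultiplicity_dvd A _).trans
              (Polynomial.map_dvd _ (hcol v (Finset.mem_range.mp hv)))
          obtain ⟨w, hw⟩ := hgadvd
          rw [hw, mul_comp, pow_comp, sub_comp, X_comp, C_comp]
          refine Dvd.dvd.mul_right ?_ _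
          exact pow_dvd_pow_of_dvd (dvd_iff_isRoot.mpr (by simp [IsRoot, hξr])) _
        have hXNd : (X - C ξ) ^ ea ∣ (X ^ (p ^ s * n'a * nb) - 1 : K[X]) :=
          (pow_dvd_pow _ h_ea_le).trans hdvdXN
        have hfin := dvd_add (hXNd.trans hsplit) hTd
        rwa [sub_add_cancel] at hfin
      have h_eb : (if i % nb ∈ DB then p ^ s else 0) ≤ rootMultiplicity ξ G := by
        split_ifs with hmem
        · rw [le_rootMultiplicity_iff hG0]
          have hβroot : Bp.eval ((β ^ (i % nb) : Kˣ) : K) = 0 := by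
            have h := ((hDB (i % nb)).mp hmem).2
            rw [hB_def, eval_map]
            exact h
          have hTd : (X - C ξ) ^ p ^ s ∣ T := by
            rw [hT_def, Finset.sum_product]
            refine Finset.dvd_sum fun u hu => ?_
            dsimp only
            have hinner : ∑ v ∈ Finset.range nb,
                C ((algebraMap F K) (Mf u v)) * X ^ (r * u + tt * v)
                = (((∑ v ∈ Finset.range nb, C (Mf u v) * X ^ v).map
                    (algebraMap F K)).comp (X ^ tt)) * X ^ (r * u) := by
              rw [Polynomial.map_sum, Polynomial.sum_comp, Finset.sum_mul]
              refine Finset.sum_congr rfl fun v _ => ?_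
              rw [Polynomial.map_mul, map_C, Polynomial.map_pow, map_X, mul_comp, C_comp,
                pow_comp, X_comp, ← pow_mul, mul_assoc, ← pow_add, add_comm (tt * v) (r * u)]
            rw [hinner]
            refine Dvd.dvd.mul_right ?_ _
            have hgbdvd : (X - C ((β ^ (i % nb) : Kˣ) : K)) ∣
                (∑ v ∈ Finset.range nb, C (Mf u v) * X ^ v).map (algebraMap F K) :=
              (dvd_iff_isRoot.mpr hβroot).trans
                (Polynomial.map_dvd _ (hrow u (Finset.mem_range.mp hu)))
            obtain ⟨w, hw⟩ := hgbdvd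
            rw [hw, mul_comp, sub_comp, X_comp, C_comp]
            refine Dvd.dvd.mul_right ?_ _
            obtain ⟨t', ht'⟩ := (dvd_mul_right (p ^ s) n'a).trans ht_na
            have hfact : (X ^ tt - C ((β ^ (i % nb) : Kˣ) : K) : K[X])
                = (X ^ t' - C (ξ ^ t')) ^ p ^ s := by
              rw [sub_pow_char_pow, ← pow_mul, ← C_pow, ← pow_mul,
                show t' * p ^ s = tt from by rw [ht']; ring, hξt]
            rw [hfact]
            exact pow_dvd_pow_of_dvd (dvd_iff_isRoot.mpr (by simp [IsRoot])) _
          have hfin := dvd_add (hdvdXN.trans hsplit) hTd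
          rwa [sub_add_cancel] at hfin
        · exact Nat.zero_le _
      exact max_le h_ea h_eb
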